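/- Define, for each integer N ≥ 1, F_det(N) = 2^{−(N+3)}·Σ_{k=0}^{N} C(N,k)·( (N−2k−1)/√(k+1) + (N−2k+1)/√(N−k+1) )², p(N) = 1 − (N+2)/2^{N+1}, and F(N) = F_det(N)/p(N). Then there exists a constant C > 0 such that for every integer N ≥ 1, |1 − F(N)| ≤ C/N. -/

import Mathlib

open Finset

/-- Entanglement fidelity of non-optimal deterministic qubit PBT with `N`
ports and square-root measurements:
`F_det(N) = 2^{−(N+3)}·Σ_{k=0}^{N} C(N,k)·((N−2k−1)/√(k+1) + (N−2k+1)/√(N−k+1))²`. -/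
noncomputable def Fdet (N : ℕ) : ℝ :=
  (2 : ℝ) ^ (-((N : ℝ) + 3)) *
    ∑ k ∈ Finset.range (N + 1),
      (N.choose k : ℝ) *
        (((N : ℝ) - 2 * k - 1) / Real.sqrt ((k : ℝ) + 1) +
          ((N : ℝ) - 2 * k + 1) / Real.sqrt ((N : ℝ) - (k : ℝ) + 1)) ^ 2

/-- Success probability of qubit minimal PBT with `N` ports:
`p(N) = 1 − (N+2)/2^{N+1}`. -/
noncomputable def psucc (N : ℕ) : ℝ := 1 - ((N : ℝ) + 2) / 2 ^ (N + 1)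

/-- Conditional entanglement fidelity of qubit minimal PBT. -/
noncomputable def Fmin (N : ℕ) : ℝ := Fdet N / psucc N

/-! ### Auxiliary lemmas: binomial moment identities -/

private lemma sum_shift (M : ℕ) (f : ℕ → ℝ) :
    ∑ k ∈ range (M + 2), ((M+1).choose k : ℝ) * f k
      = ∑ k ∈ range (M + 1), (M.choose k : ℝ) * (f k + f (k+1)) := by
  rw [Finset.sum_range_succ' (fun k => ((M+1).choose k : ℝ) * f k) (M+1)]
  have h1 : ∀ k ∈ range (M+1), ((M+1).choose (k+1) : ℝ) * f (k+1)
      = (M.choose k : ℝ) * f (k+1) + (M.choose (k+1) : ℝ) * f (k+1) := by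
    intro k _
    rw [Nat.choose_succ_succ]
    push_cast; ring
  rw [Finset.sum_congr rfl h1, Finset.sum_add_distrib]
  have h2 : ∑ k ∈ range (M+1), (M.choose (k+1) : ℝ) * f (k+1)
      = (∑ k ∈ range (M+1), (M.choose k : ℝ) * f k) - (M.choose 0 : ℝ) * f 0 := by
    have h4 := Finset.sum_range_succ' (fun k => (M.choose k : ℝ) * f k) (M+1)
    have h3 : ∑ k ∈ range (M+2), (M.choose k : ℝ) * f k
        = ∑ k ∈ range (M+1), (M.choose k : ℝ) * f k := by
      rw [Finset.sum_range_succ]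
      simp [Nat.choose_succ_self]
    rw [h3] at h4
    linarith
  rw [h2]
  have h5 : ∀ k ∈ range (M+1), (M.choose k : ℝ) * (f k + f (k+1))
      = (M.choose k : ℝ) * f k + (M.choose k : ℝ) * f (k+1) := by
    intro k _; ring
  rw [Finset.sum_congr rfl h5, Finset.sum_add_distrib]
  simp
  ring

private lemma sum_choose_real (M : ℕ) :
    ∑ k ∈ range (M+1), (M.choose k : ℝ) = 2^M := by
  have := Nat.sum_range_choose M
  exact_mod_cast congrArg (Nat.cast : ℕ → ℝ) this

private lemma moment2 (M : ℕ) :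
    ∑ k ∈ range (M+1), (M.choose k : ℝ) * ((M:ℝ) - 2*(k:ℝ))^2 = (M:ℝ) * 2^M := by
  induction M with
  | zero => norm_num
  | succ M ih =>
    push_cast
    rw [show M+1+1 = M+2 from rfl, sum_shift]
    have h5 : ∀ k ∈ range (M+1), (M.choose k : ℝ) *
          ((((M:ℝ)+1) - 2*(k:ℝ))^2 + (((M:ℝ)+1) - 2*((k+1 : ℕ):ℝ))^2)
        = 2 * ((M.choose k : ℝ) * ((M:ℝ) - 2*(k:ℝ))^2) + 2 * (M.choose k : ℝ) := by
      intro k _; push_cast; ring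
    rw [Finset.sum_congr rfl h5, Finset.sum_add_distrib, ← Finset.mul_sum, ← Finset.mul_sum,
      ih, sum_choose_real]
    ring

private lemma moment4 (M : ℕ) :
    ∑ k ∈ range (M+1), (M.choose k : ℝ) * ((M:ℝ) - 2*(k:ℝ))^4
      = (3*(M:ℝ)^2 - 2*(M:ℝ)) * 2^M := by
  induction M with
  | zero => norm_num
  | succ M ih =>
    push_cast
    rw [show M+1+1 = M+2 from rfl, sum_shift]
    have h5 : ∀ k ∈ range (M+1), (M.choose k : ℝ) *
          ((((M:ℝ)+1) - 2*(k:ℝ))^4 + (((M:ℝ)+1) - 2*((k+1 : ℕ):ℝ))^4)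
        = 2 * ((M.choose k : ℝ) * ((M:ℝ) - 2*(k:ℝ))^4)
          + 12 * ((M.choose k : ℝ) * ((M:ℝ) - 2*(k:ℝ))^2) + 2 * (M.choose k : ℝ) := by
      intro k _; push_cast; ring
    rw [Finset.sum_congr rfl h5, Finset.sum_add_distrib, Finset.sum_add_distrib,
      ← Finset.mul_sum, ← Finset.mul_sum, ← Finset.mul_sum, ih, moment2, sum_choose_real]
    ring

/-! ### Edge-trimmed moment sums -/

private lemma trim_bot2 (N : ℕ) :
    ∑ k ∈ range (N+1), ((N+1).choose (k+1) : ℝ) * (((N:ℝ)+1) - 2*((k:ℝ)+1))^2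
      = ((N:ℝ)+1)*2^(N+1) - ((N:ℝ)+1)^2 := by
  have h := moment2 (N+1)
  rw [Finset.sum_range_succ' (fun k => ((N+1).choose k : ℝ) * (((N+1:ℕ):ℝ) - 2*(k:ℝ))^2) (N+1)] at h
  simp only [Nat.choose_zero_right, Nat.cast_one, Nat.cast_zero] at h
  have : ∀ k ∈ range (N+1), ((N+1).choose (k+1) : ℝ) * (((N:ℝ)+1) - 2*((k:ℝ)+1))^2
      = ((N+1).choose (k+1) : ℝ) * (((N+1:ℕ):ℝ) - 2*((k+1:ℕ):ℝ))^2 := by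
    intro k _; push_cast; ring
  rw [Finset.sum_congr rfl this]
  push_cast at h ⊢
  linarith

private lemma trim_top2 (N : ℕ) :
    ∑ k ∈ range (N+1), ((N+1).choose k : ℝ) * (((N:ℝ)+1) - 2*(k:ℝ))^2
      = ((N:ℝ)+1)*2^(N+1) - ((N:ℝ)+1)^2 := by
  have h := moment2 (N+1)
  rw [Finset.sum_range_succ] at h
  simp only [Nat.choose_self, Nat.cast_one] at h
  have : ∀ k ∈ range (N+1), ((N+1).choose k : ℝ) * (((N:ℝ)+1) - 2*(k:ℝ))^2
      = ((N+1).choose k : ℝ) * (((N+1:ℕ):ℝ) - 2*(k:ℝ))^2 := by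
    intro k _; push_cast; ring
  rw [Finset.sum_congr rfl this]
  push_cast at h ⊢
  nlinarith [h]

private lemma mid0 (N : ℕ) :
    ∑ k ∈ range (N+1), ((N+2).choose (k+1) : ℝ) = 2^(N+2) - 2 := by
  have h := sum_choose_real (N+2)
  rw [Finset.sum_range_succ] at h
  rw [Finset.sum_range_succ' (fun k => ((N+2).choose k : ℝ)) (N+1)] at h
  simp only [Nat.choose_self, Nat.choose_zero_right, Nat.cast_one] at h
  linarith

private lemma mid2 (N : ℕ) :
    ∑ k ∈ range (N+1), ((N+2).choose (k+1) : ℝ) * ((N:ℝ) - 2*(k:ℝ))^2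
      = ((N:ℝ)+2)*2^(N+2) - 2*((N:ℝ)+2)^2 := by
  have h := moment2 (N+2)
  rw [show N+2+1 = N+1+1+1 from rfl] at h
  rw [Finset.sum_range_succ] at h
  rw [Finset.sum_range_succ' (fun k => ((N+2).choose k : ℝ) * (((N+2:ℕ):ℝ) - 2*(k:ℝ))^2) (N+1)] at h
  simp only [Nat.choose_self, Nat.choose_zero_right, Nat.cast_one] at h
  have : ∀ k ∈ range (N+1), ((N+2).choose (k+1) : ℝ) * ((N:ℝ) - 2*(k:ℝ))^2
      = ((N+2).choose (k+1) : ℝ) * (((N+2:ℕ):ℝ) - 2*((k+1:ℕ):ℝ))^2 := by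
    intro k _; push_cast; ring
  rw [Finset.sum_congr rfl this]
  push_cast at h ⊢
  nlinarith [h]

private lemma mid4 (N : ℕ) :
    ∑ k ∈ range (N+1), ((N+2).choose (k+1) : ℝ) * ((N:ℝ) - 2*(k:ℝ))^4
      = (3*((N:ℝ)+2)^2 - 2*((N:ℝ)+2))*2^(N+2) - 2*((N:ℝ)+2)^4 := by
  have h := moment4 (N+2)
  rw [show N+2+1 = N+1+1+1 from rfl] at h
  rw [Finset.sum_range_succ] at h
  rw [Finset.sum_range_succ' (fun k => ((N+2).choose k : ℝ) * (((N+2:ℕ):ℝ) - 2*(k:ℝ))^4) (N+1)] at h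
  simp only [Nat.choose_self, Nat.choose_zero_right, Nat.cast_one] at h
  have : ∀ k ∈ range (N+1), ((N+2).choose (k+1) : ℝ) * ((N:ℝ) - 2*(k:ℝ))^4
      = ((N+2).choose (k+1) : ℝ) * (((N+2:ℕ):ℝ) - 2*((k+1:ℕ):ℝ))^4 := by
    intro k _; push_cast; ring
  rw [Finset.sum_congr rfl this]
  push_cast at h ⊢
  nlinarith [h]

/-! ### The diagonal sums -/

private lemma A_eq (N : ℕ) :
    ∑ k ∈ range (N+1), (N.choose k : ℝ) * ((N:ℝ) - 2*(k:ℝ) - 1)^2 / ((k:ℝ)+1)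
      = 2^(N+1) - ((N:ℝ)+1) := by
  have key : ∀ k ∈ range (N+1), (N.choose k : ℝ) * ((N:ℝ) - 2*(k:ℝ) - 1)^2 / ((k:ℝ)+1)
      = (((N+1).choose (k+1) : ℝ) * (((N:ℝ)+1) - 2*((k:ℝ)+1))^2) / ((N:ℝ)+1) := by
    intro k _
    have hc : ((N:ℝ)+1) * (N.choose k : ℝ) = ((N+1).choose (k+1) : ℝ) * ((k:ℝ)+1) := by
      exact_mod_cast congrArg (Nat.cast : ℕ → ℝ) (Nat.add_one_mul_choose_eq N k)
    have hk' : ((k:ℝ)+1) ≠ 0 := by positivity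
    have hN' : ((N:ℝ)+1) ≠ 0 := by positivity
    rw [div_eq_div_iff hk' hN']
    linear_combination ((N:ℝ) - 2*(k:ℝ) - 1)^2 * hc
  rw [Finset.sum_congr rfl key, ← Finset.sum_div, trim_bot2]
  have hN : ((N:ℝ)+1) ≠ 0 := by positivity
  field_simp

private lemma B_eq (N : ℕ) :
    ∑ k ∈ range (N+1), (N.choose k : ℝ) * ((N:ℝ) - 2*(k:ℝ) + 1)^2 / ((N:ℝ) - (k:ℝ) + 1)
      = 2^(N+1) - ((N:ℝ)+1) := by
  have key : ∀ k ∈ range (N+1), (N.choose k : ℝ) * ((N:ℝ) - 2*(k:ℝ) + 1)^2 / ((N:ℝ) - (k:ℝ) + 1)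
      = (((N+1).choose k : ℝ) * (((N:ℝ)+1) - 2*(k:ℝ))^2) / ((N:ℝ)+1) := by
    intro k hk
    have hkN : k ≤ N := by simpa [Nat.lt_succ_iff] using hk
    have hc0 := Nat.choose_mul_succ_eq N k
    have hcast : ((N + 1 - k : ℕ) : ℝ) = (N:ℝ) + 1 - (k:ℝ) := by
      have : k ≤ N + 1 := le_trans hkN (Nat.le_succ N)
      push_cast [this]; ring
    have hc : (N.choose k : ℝ) * ((N:ℝ)+1) = ((N+1).choose k : ℝ) * ((N:ℝ) + 1 - (k:ℝ)) := by
      rw [← hcast]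
      exact_mod_cast congrArg (Nat.cast : ℕ → ℝ) hc0
    have hkR : (k:ℝ) ≤ N := by exact_mod_cast hkN
    have hd : ((N:ℝ) - (k:ℝ) + 1) ≠ 0 := by nlinarith
    have hN : ((N:ℝ)+1) ≠ 0 := by positivity
    rw [div_eq_div_iff hd hN]
    linear_combination ((N:ℝ) - 2*(k:ℝ) + 1)^2 * hc
  rw [Finset.sum_congr rfl key, ← Finset.sum_div, trim_top2]
  have hN : ((N:ℝ)+1) ≠ 0 := by positivity
  field_simp

/-! ### Square-root estimates -/

private lemma sqrt_ub (N k : ℕ) (hk : k ≤ N) :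
    Real.sqrt (((k:ℝ)+1) * ((N:ℝ) - (k:ℝ) + 1)) ≤ ((N:ℝ)+2)/2 := by
  have hkR : (k:ℝ) ≤ N := by exact_mod_cast hk
  rw [show ((N:ℝ)+2)/2 = Real.sqrt ((((N:ℝ)+2)/2)^2) from (Real.sqrt_sq (by positivity)).symm]
  apply Real.sqrt_le_sqrt
  nlinarith [sq_nonneg ((N:ℝ) - 2*(k:ℝ))]

private lemma sqrt_lb (N k : ℕ) (hk : k ≤ N) :
    (((N:ℝ)+2)^2 - ((N:ℝ) - 2*(k:ℝ))^2) / (2*((N:ℝ)+2))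
      ≤ Real.sqrt (((k:ℝ)+1) * ((N:ℝ) - (k:ℝ) + 1)) := by
  have hkR : (k:ℝ) ≤ N := by exact_mod_cast hk
  have hk0 : (0:ℝ) ≤ k := Nat.cast_nonneg k
  have hd : ((N:ℝ) - 2*(k:ℝ))^2 ≤ ((N:ℝ)+2)^2 := by nlinarith
  have hL : 0 ≤ (((N:ℝ)+2)^2 - ((N:ℝ) - 2*(k:ℝ))^2) / (2*((N:ℝ)+2)) := by
    apply div_nonneg (by linarith) (by positivity)
  rw [show (((N:ℝ)+2)^2 - ((N:ℝ) - 2*(k:ℝ))^2) / (2*((N:ℝ)+2))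
      = Real.sqrt (((((N:ℝ)+2)^2 - ((N:ℝ) - 2*(k:ℝ))^2) / (2*((N:ℝ)+2)))^2)
      from (Real.sqrt_sq hL).symm]
  apply Real.sqrt_le_sqrt
  rw [div_pow]
  rw [div_le_iff₀ (by positivity)]
  nlinarith [hd, sq_nonneg (((N:ℝ)+2)^2 - ((N:ℝ) - 2*(k:ℝ))^2), sq_nonneg ((N:ℝ) - 2*(k:ℝ)),
    mul_nonneg (sub_nonneg.mpr hd) (sq_nonneg ((N:ℝ) - 2*(k:ℝ)))]

/-! ### Cross-term decomposition -/

private lemma cross_id (N k : ℕ) (hk : k ≤ N) :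
    (N.choose k : ℝ) * (((N:ℝ)+1) * ((N:ℝ)+2))
      = ((N+2).choose (k+1) : ℝ) * (((k:ℝ)+1) * ((N:ℝ) - (k:ℝ) + 1)) := by
  have h1 := Nat.choose_mul_succ_eq N k
  have h2 := Nat.add_one_mul_choose_eq (N+1) k
  have hnat : N.choose k * ((N+1) * (N+2)) = (N+2).choose (k+1) * ((k+1) * (N+1-k)) := by
    calc N.choose k * ((N+1) * (N+2)) = (N.choose k * (N+1)) * (N+2) := by ring
    _ = ((N+1).choose k * (N+1-k)) * (N+2) := by rw [h1]
    _ = ((N+2) * (N+1).choose k) * (N+1-k) := by ring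
    _ = ((N+2).choose (k+1) * (k+1)) * (N+1-k) := by
        rw [show (N+2) * (N+1).choose k = (N+2).choose (k+1) * (k+1) from h2]
    _ = (N+2).choose (k+1) * ((k+1) * (N+1-k)) := by ring
  have hcast : ((N + 1 - k : ℕ) : ℝ) = (N:ℝ) + 1 - (k:ℝ) := by
    have hk' : k ≤ N + 1 := le_trans hk (Nat.le_succ N)
    push_cast [hk']; ring
  have := congrArg (Nat.cast : ℕ → ℝ) hnat
  push_cast [hcast] at this
  linarith [this]

private lemma term_decomp (N k : ℕ) (hk : k ≤ N) :
    (N.choose k : ℝ) *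
        (((N : ℝ) - 2 * (k:ℝ) - 1) / Real.sqrt ((k : ℝ) + 1) +
          ((N : ℝ) - 2 * (k:ℝ) + 1) / Real.sqrt ((N : ℝ) - (k : ℝ) + 1)) ^ 2
      = (N.choose k : ℝ) * ((N:ℝ) - 2*(k:ℝ) - 1)^2 / ((k:ℝ)+1)
        + (N.choose k : ℝ) * ((N:ℝ) - 2*(k:ℝ) + 1)^2 / ((N:ℝ) - (k:ℝ) + 1)
        + (2/(((N:ℝ)+1)*((N:ℝ)+2))) *
            (((N+2).choose (k+1):ℝ) * (((N:ℝ) - 2*(k:ℝ))^2 - 1) *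
              Real.sqrt (((k:ℝ)+1) * ((N:ℝ) - (k:ℝ) + 1))) := by
  have hkR : (k:ℝ) ≤ N := by exact_mod_cast hk
  set x : ℝ := (k:ℝ)+1 with hxdef
  set y : ℝ := (N:ℝ) - (k:ℝ) + 1 with hydef
  have hx : (0:ℝ) < x := by positivity
  have hy : (0:ℝ) < y := by rw [hydef]; linarith
  have hsx : Real.sqrt x ≠ 0 := by positivity
  have hsy : Real.sqrt y ≠ 0 := ne_of_gt (Real.sqrt_pos.mpr hy)
  have hsxx : Real.sqrt x ^ 2 = x := Real.sq_sqrt hx.le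
  have hsyy : Real.sqrt y ^ 2 = y := Real.sq_sqrt hy.le
  have hs : Real.sqrt x * Real.sqrt y = Real.sqrt (x*y) := (Real.sqrt_mul hx.le y).symm
  have hspos : (0:ℝ) < Real.sqrt (x*y) := Real.sqrt_pos.mpr (by positivity)
  have hss : Real.sqrt (x*y) * Real.sqrt (x*y) = x*y :=
    Real.mul_self_sqrt (by positivity)
  set u : ℝ := (N:ℝ) - 2*(k:ℝ) - 1 with hu
  set v : ℝ := (N:ℝ) - 2*(k:ℝ) + 1 with hv
  have k1 : 2*(u*v)/(Real.sqrt (x*y)) = 2*(u*v)*Real.sqrt (x*y)/(x*y) := by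
    rw [div_eq_div_iff hspos.ne' (by positivity)]
    linear_combination (-2*(u*v))*hss
  have e : (u / Real.sqrt x + v / Real.sqrt y)^2
      = u^2/x + v^2/y + 2*(u*v)/(Real.sqrt (x*y)) := by
    have h2 : (u / Real.sqrt x + v / Real.sqrt y)^2
        = (u*Real.sqrt y + Real.sqrt x*v)^2/(x*y) := by
      rw [div_add_div _ _ hsx hsy, div_pow, mul_pow, hsxx, hsyy]
    have h3 : (u*Real.sqrt y + Real.sqrt x*v)^2
        = u^2*y + v^2*x + 2*(u*v)*Real.sqrt (x*y) := by
      rw [← hs]; linear_combination u^2*hsyy + v^2*hsxx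
    rw [h2, h3, k1]
    field_simp
  rw [e]
  have e3 : (N.choose k:ℝ) / Real.sqrt (x*y)
      = ((N+2).choose (k+1):ℝ) * Real.sqrt (x*y) / (((N:ℝ)+1)*((N:ℝ)+2)) := by
    rw [div_eq_div_iff hspos.ne' (by positivity)]
    linear_combination cross_id N k hk - (((N+2).choose (k+1)):ℝ) * hss
  have e4 : (N.choose k:ℝ) * (2*(u*v)/(Real.sqrt (x*y)))
      = (2/(((N:ℝ)+1)*((N:ℝ)+2))) *
          (((N+2).choose (k+1):ℝ) * (((N:ℝ) - 2*(k:ℝ))^2 - 1) * Real.sqrt (x*y)) := by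
    have huv : u*v = ((N:ℝ) - 2*(k:ℝ))^2 - 1 := by rw [hu, hv]; ring
    rw [show (N.choose k:ℝ) * (2*(u*v)/(Real.sqrt (x*y)))
        = 2*(u*v) * ((N.choose k:ℝ) / Real.sqrt (x*y)) by ring, e3, huv]
    ring
  rw [mul_add, mul_add, e4]
  ring

/-! ### Cross-term bounds -/

private lemma coeff_nonneg (N k : ℕ) (h2 : N ≠ 2*k) :
    (0:ℝ) ≤ ((N:ℝ) - 2*(k:ℝ))^2 - 1 := by
  have hz : ((N:ℤ) - 2*(k:ℤ)) ≠ 0 := by omega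
  have h1 : (1:ℤ) ≤ |(N:ℤ) - 2*(k:ℤ)| := Int.one_le_abs hz
  have h2' : (1:ℤ) ≤ ((N:ℤ) - 2*(k:ℤ))^2 := by
    nlinarith [sq_abs ((N:ℤ) - 2*(k:ℤ)), abs_nonneg ((N:ℤ) - 2*(k:ℤ))]
  have : (1:ℝ) ≤ ((N:ℝ) - 2*(k:ℝ))^2 := by exact_mod_cast h2'
  linarith

private lemma mid_case (N k : ℕ) (h2 : N = 2*k) :
    Real.sqrt (((k:ℝ)+1) * ((N:ℝ) - (k:ℝ) + 1)) = ((N:ℝ)+2)/2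
      ∧ (N:ℝ) - 2*(k:ℝ) = 0 := by
  have hd : (N:ℝ) - 2*(k:ℝ) = 0 := by rw [h2]; push_cast; ring
  have hy : (N:ℝ) - (k:ℝ) + 1 = (k:ℝ)+1 := by rw [h2]; push_cast; ring
  have hN2 : ((N:ℝ)+2)/2 = (k:ℝ)+1 := by rw [h2]; push_cast; ring
  refine ⟨?_, hd⟩
  rw [hy, Real.sqrt_mul_self (by positivity), hN2]

private lemma term_ub (N k : ℕ) (hk : k ≤ N) :
    ((N+2).choose (k+1):ℝ) * (((N:ℝ) - 2*(k:ℝ))^2 - 1) *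
        Real.sqrt (((k:ℝ)+1) * ((N:ℝ) - (k:ℝ) + 1))
      ≤ ((N+2).choose (k+1):ℝ) * (((N:ℝ) - 2*(k:ℝ))^2 - 1) * (((N:ℝ)+2)/2) := by
  by_cases h2 : N = 2*k
  · obtain ⟨hs, hd⟩ := mid_case N k h2
    rw [hs]
  · have hc := coeff_nonneg N k h2
    exact mul_le_mul_of_nonneg_left (sqrt_ub N k hk)
      (mul_nonneg (Nat.cast_nonneg _) hc)

private lemma term_lb (N k : ℕ) (hk : k ≤ N) :
    ((N+2).choose (k+1):ℝ) * (((N:ℝ) - 2*(k:ℝ))^2 - 1) *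
        ((((N:ℝ)+2)^2 - ((N:ℝ) - 2*(k:ℝ))^2) / (2*((N:ℝ)+2)))
      ≤ ((N+2).choose (k+1):ℝ) * (((N:ℝ) - 2*(k:ℝ))^2 - 1) *
        Real.sqrt (((k:ℝ)+1) * ((N:ℝ) - (k:ℝ) + 1)) := by
  by_cases h2 : N = 2*k
  · obtain ⟨hs, hd⟩ := mid_case N k h2
    rw [hs, hd]
    apply le_of_eq
    have hN2 : ((N:ℝ)+2) ≠ 0 := by positivity
    field_simp
    ring
  · have hc := coeff_nonneg N k h2
    exact mul_le_mul_of_nonneg_left (sqrt_lb N k hk)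
      (mul_nonneg (Nat.cast_nonneg _) hc)

private lemma Xnum_ub (N : ℕ) :
    ∑ k ∈ range (N+1), ((N+2).choose (k+1):ℝ) * (((N:ℝ) - 2*(k:ℝ))^2 - 1) *
        Real.sqrt (((k:ℝ)+1) * ((N:ℝ) - (k:ℝ) + 1))
      ≤ (((N:ℝ)+2)/2) * ((((N:ℝ)+2)*2^(N+2) - 2*((N:ℝ)+2)^2) - (2^(N+2) - 2)) := by
  have h1 : ∑ k ∈ range (N+1), ((N+2).choose (k+1):ℝ) * (((N:ℝ) - 2*(k:ℝ))^2 - 1) *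
        Real.sqrt (((k:ℝ)+1) * ((N:ℝ) - (k:ℝ) + 1))
      ≤ ∑ k ∈ range (N+1), ((N+2).choose (k+1):ℝ) * (((N:ℝ) - 2*(k:ℝ))^2 - 1) *
          (((N:ℝ)+2)/2) := by
    apply Finset.sum_le_sum
    intro k hk
    exact term_ub N k (by simpa [Nat.lt_succ_iff] using hk)
  refine le_trans h1 (le_of_eq ?_)
  have h2 : ∀ k ∈ range (N+1), ((N+2).choose (k+1):ℝ) * (((N:ℝ) - 2*(k:ℝ))^2 - 1) *
          (((N:ℝ)+2)/2)
      = (((N:ℝ)+2)/2) * (((N+2).choose (k+1):ℝ) * ((N:ℝ) - 2*(k:ℝ))^2)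
        - (((N:ℝ)+2)/2) * ((N+2).choose (k+1):ℝ) := by
    intro k _; ring
  rw [Finset.sum_congr rfl h2, Finset.sum_sub_distrib, ← Finset.mul_sum, ← Finset.mul_sum,
    mid2, mid0]
  ring

private lemma Xnum_lb (N : ℕ) :
    (1/(2*((N:ℝ)+2))) * ( ((((N:ℝ)+2)^2+1)) * (((N:ℝ)+2)*2^(N+2) - 2*((N:ℝ)+2)^2)
        - ((N:ℝ)+2)^2 * (2^(N+2) - 2)
        - ((3*((N:ℝ)+2)^2 - 2*((N:ℝ)+2))*2^(N+2) - 2*((N:ℝ)+2)^4) )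
      ≤ ∑ k ∈ range (N+1), ((N+2).choose (k+1):ℝ) * (((N:ℝ) - 2*(k:ℝ))^2 - 1) *
          Real.sqrt (((k:ℝ)+1) * ((N:ℝ) - (k:ℝ) + 1)) := by
  have h1 : ∑ k ∈ range (N+1), ((N+2).choose (k+1):ℝ) * (((N:ℝ) - 2*(k:ℝ))^2 - 1) *
          ((((N:ℝ)+2)^2 - ((N:ℝ) - 2*(k:ℝ))^2) / (2*((N:ℝ)+2)))
      ≤ ∑ k ∈ range (N+1), ((N+2).choose (k+1):ℝ) * (((N:ℝ) - 2*(k:ℝ))^2 - 1) *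
          Real.sqrt (((k:ℝ)+1) * ((N:ℝ) - (k:ℝ) + 1)) := by
    apply Finset.sum_le_sum
    intro k hk
    exact term_lb N k (by simpa [Nat.lt_succ_iff] using hk)
  refine le_trans (le_of_eq ?_) h1
  have h2 : ∀ k ∈ range (N+1), ((N+2).choose (k+1):ℝ) * (((N:ℝ) - 2*(k:ℝ))^2 - 1) *
          ((((N:ℝ)+2)^2 - ((N:ℝ) - 2*(k:ℝ))^2) / (2*((N:ℝ)+2)))
      = (1/(2*((N:ℝ)+2))) * ( (((N:ℝ)+2)^2+1) * (((N+2).choose (k+1):ℝ) * ((N:ℝ) - 2*(k:ℝ))^2)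
          - ((N:ℝ)+2)^2 * ((N+2).choose (k+1):ℝ)
          - ((N+2).choose (k+1):ℝ) * ((N:ℝ) - 2*(k:ℝ))^4 ) := by
    intro k _
    have hN2 : ((N:ℝ)+2) ≠ 0 := by positivity
    field_simp
    ring
  rw [Finset.sum_congr rfl h2, ← Finset.mul_sum]
  congr 1
  rw [Finset.sum_sub_distrib, Finset.sum_sub_distrib, ← Finset.mul_sum, ← Finset.mul_sum,
    mid2, mid0, mid4]

/-! ### Fdet bounds -/

private lemma sum_decomp (N : ℕ) :
    ∑ k ∈ Finset.range (N + 1),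
      (N.choose k : ℝ) *
        (((N : ℝ) - 2 * k - 1) / Real.sqrt ((k : ℝ) + 1) +
          ((N : ℝ) - 2 * k + 1) / Real.sqrt ((N : ℝ) - (k : ℝ) + 1)) ^ 2
      = (2^(N+1) - ((N:ℝ)+1)) + (2^(N+1) - ((N:ℝ)+1))
        + (2/(((N:ℝ)+1)*((N:ℝ)+2))) *
            ∑ k ∈ range (N+1), ((N+2).choose (k+1):ℝ) * (((N:ℝ) - 2*(k:ℝ))^2 - 1) *
              Real.sqrt (((k:ℝ)+1) * ((N:ℝ) - (k:ℝ) + 1)) := by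
  have h1 : ∀ k ∈ range (N+1),
      (N.choose k : ℝ) *
        (((N : ℝ) - 2 * k - 1) / Real.sqrt ((k : ℝ) + 1) +
          ((N : ℝ) - 2 * k + 1) / Real.sqrt ((N : ℝ) - (k : ℝ) + 1)) ^ 2
      = (N.choose k : ℝ) * ((N:ℝ) - 2*(k:ℝ) - 1)^2 / ((k:ℝ)+1)
        + (N.choose k : ℝ) * ((N:ℝ) - 2*(k:ℝ) + 1)^2 / ((N:ℝ) - (k:ℝ) + 1)
        + (2/(((N:ℝ)+1)*((N:ℝ)+2))) *
            (((N+2).choose (k+1):ℝ) * (((N:ℝ) - 2*(k:ℝ))^2 - 1) *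
              Real.sqrt (((k:ℝ)+1) * ((N:ℝ) - (k:ℝ) + 1))) := by
    intro k hk
    exact term_decomp N k (by simpa [Nat.lt_succ_iff] using hk)
  rw [Finset.sum_congr rfl h1, Finset.sum_add_distrib, Finset.sum_add_distrib,
    A_eq, B_eq, ← Finset.mul_sum]

private lemma Fdet_bounds (N : ℕ) :
    Fdet N ≤ psucc N ∧ psucc N - 3/(2*((N:ℝ)+2)) ≤ Fdet N := by
  have ht : (0:ℝ) < 2^N := by positivity
  have hpow : (2:ℝ) ^ (-((N:ℝ)+3)) = (8*(2:ℝ)^N)⁻¹ := by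
    have h1 : (-((N:ℝ)+3)) = -((N+3 : ℕ):ℝ) := by push_cast; ring
    rw [h1, Real.rpow_neg (by norm_num : (0:ℝ) ≤ 2), Real.rpow_natCast]
    congr 1
    rw [pow_add]
    norm_num
    ring
  have hFdet : Fdet N = (8*(2:ℝ)^N)⁻¹ *
      ((2^(N+1) - ((N:ℝ)+1)) + (2^(N+1) - ((N:ℝ)+1))
        + (2/(((N:ℝ)+1)*((N:ℝ)+2))) *
            ∑ k ∈ range (N+1), ((N+2).choose (k+1):ℝ) * (((N:ℝ) - 2*(k:ℝ))^2 - 1) *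
              Real.sqrt (((k:ℝ)+1) * ((N:ℝ) - (k:ℝ) + 1))) := by
    rw [Fdet, hpow, sum_decomp]
  have hfacpos : (0:ℝ) ≤ 2/(((N:ℝ)+1)*((N:ℝ)+2)) := by positivity
  -- upper bound on the cross term
  have cUB : (2/(((N:ℝ)+1)*((N:ℝ)+2))) *
      (∑ k ∈ range (N+1), ((N+2).choose (k+1):ℝ) * (((N:ℝ) - 2*(k:ℝ))^2 - 1) *
        Real.sqrt (((k:ℝ)+1) * ((N:ℝ) - (k:ℝ) + 1)))
      ≤ 2^(N+2) - 2*((N:ℝ)+3) := by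
    refine le_trans (mul_le_mul_of_nonneg_left (Xnum_ub N) hfacpos) (le_of_eq ?_)
    have h1 : ((N:ℝ)+1) ≠ 0 := by positivity
    have h2 : ((N:ℝ)+2) ≠ 0 := by positivity
    field_simp
    ring
  -- lower bound on the cross term
  have cLB : ((N:ℝ)-1)/((N:ℝ)+2) * 2^(N+2)
      ≤ (2/(((N:ℝ)+1)*((N:ℝ)+2))) *
        (∑ k ∈ range (N+1), ((N+2).choose (k+1):ℝ) * (((N:ℝ) - 2*(k:ℝ))^2 - 1) *
          Real.sqrt (((k:ℝ)+1) * ((N:ℝ) - (k:ℝ) + 1))) := by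
    refine le_trans (le_of_eq ?_) (mul_le_mul_of_nonneg_left (Xnum_lb N) hfacpos)
    have h1 : ((N:ℝ)+1) ≠ 0 := by positivity
    have h2 : ((N:ℝ)+2) ≠ 0 := by positivity
    field_simp
    ring
  have p1 : (2:ℝ)^(N+1) = 2*2^N := by rw [pow_succ]; ring
  have p2 : (2:ℝ)^(N+2) = 4*2^N := by rw [pow_succ, pow_succ]; ring
  constructor
  · -- Fdet ≤ psucc
    have h1 : Fdet N ≤ (8*(2:ℝ)^N)⁻¹ *
        ((2^(N+1) - ((N:ℝ)+1)) + (2^(N+1) - ((N:ℝ)+1)) + (2^(N+2) - 2*((N:ℝ)+3))) := by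
      rw [hFdet]
      exact mul_le_mul_of_nonneg_left (by linarith [cUB]) (by positivity)
    refine le_trans h1 (le_of_eq ?_)
    rw [psucc, p1, p2]
    field_simp
    ring
  · -- psucc - 3/(2(N+2)) ≤ Fdet
    have h1 : (8*(2:ℝ)^N)⁻¹ *
        ((2^(N+1) - ((N:ℝ)+1)) + (2^(N+1) - ((N:ℝ)+1))
          + ((N:ℝ)-1)/((N:ℝ)+2) * 2^(N+2)) ≤ Fdet N := by
      rw [hFdet]
      exact mul_le_mul_of_nonneg_left (by linarith [cLB]) (by positivity)
    refine le_trans ?_ h1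
    have e2 : (8*(2:ℝ)^N)⁻¹ *
        ((2^(N+1) - ((N:ℝ)+1)) + (2^(N+1) - ((N:ℝ)+1))
          + ((N:ℝ)-1)/((N:ℝ)+2) * 2^(N+2))
        = 1 - ((N:ℝ)+1)/(4*2^N) - 3/(2*((N:ℝ)+2)) := by
      rw [p1, p2]
      have h2 : ((N:ℝ)+2) ≠ 0 := by positivity
      field_simp
      ring
    rw [e2, psucc, p1]
    have e3 : ((N:ℝ)+1)/(4*2^N) ≤ ((N:ℝ)+2)/(2*2^N) := by
      rw [div_le_div_iff₀ (by positivity) (by positivity)]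
      nlinarith [ht, Nat.cast_nonneg (α := ℝ) N]
    linarith

private lemma psucc_ge (N : ℕ) (hN : 1 ≤ N) : 1/4 ≤ psucc N := by
  have key : ∀ n : ℕ, 1 ≤ n → 4*(n+2) ≤ 3*2^(n+1) := by
    intro n hn
    induction n, hn using Nat.le_induction with
    | base => norm_num
    | succ n hn ih =>
      have e : 2^(n+1+1) = 2*2^(n+1) := by rw [pow_succ]; ring
      have h2 : 1 ≤ 2^(n+1) := Nat.one_le_two_pow
      omega
  have h := key N hN
  have hR : 4*((N:ℝ)+2) ≤ 3*2^(N+1) := by exact_mod_cast h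
  have hpos : (0:ℝ) < 2^(N+1) := by positivity
  rw [psucc]
  have : ((N:ℝ)+2)/2^(N+1) ≤ 3/4 := by
    rw [div_le_div_iff₀ hpos (by norm_num)]
    linarith
  linarith

/-- Minimal PBT teleports an unknown qubit with fidelity `1 − O(1/N)`:
there is a constant `C > 0` with `|1 − F(N)| ≤ C/N` for all `N ≥ 1`. -/
theorem Fmin_one_minus_O_inv_N :
    ∃ C : ℝ, 0 < C ∧ ∀ N : ℕ, 1 ≤ N → |1 - Fmin N| ≤ C / N := by
  refine ⟨6, by norm_num, ?_⟩
  intro N hN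
  have hN1 : (1:ℝ) ≤ (N:ℝ) := by exact_mod_cast hN
  have hNpos : (0:ℝ) < (N:ℝ) := by linarith
  obtain ⟨hub, hlb⟩ := Fdet_bounds N
  have hp : 1/4 ≤ psucc N := psucc_ge N hN
  have hppos : (0:ℝ) < psucc N := by linarith
  have hdiff : psucc N - Fdet N ≤ 3/(2*((N:ℝ)+2)) := by linarith
  have hdiff0 : 0 ≤ psucc N - Fdet N := by linarith
  have hFle : Fmin N ≤ 1 := by
    rw [Fmin, div_le_one hppos]; exact hub
  have h0 : 0 ≤ 1 - Fmin N := by linarith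
  rw [abs_of_nonneg h0, Fmin]
  have heq : 1 - Fdet N / psucc N = (psucc N - Fdet N) / psucc N := by
    field_simp
  rw [heq, div_le_div_iff₀ hppos hNpos]
  have hq : (psucc N - Fdet N) * ((N:ℝ)+2) ≤ 3/2 := by
    have h2 : (0:ℝ) < (N:ℝ)+2 := by linarith
    calc (psucc N - Fdet N) * ((N:ℝ)+2)
        ≤ (3/(2*((N:ℝ)+2))) * ((N:ℝ)+2) := mul_le_mul_of_nonneg_right hdiff (by linarith)
      _ = 3/2 := by field_simp
  nlinarith [hq, hdiff0, hp, hN1]
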